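/- arXiv:1210.1690 — 3 statements merged into one kernel-verified Lean document; each statement's English description precedes it below -/
import Mathlib

section
/- For every ν > 0, λ ≠ 0 and t > 0, the space-time convolution of the constant function 1 with the kernel K satisfies (1 ⋆ K)(t,x) = 2 exp(λ⁴ t/(4ν)) Φ(λ²√(t/(2ν))) − 1 for all x ∈ ℝ; i.e., ∫_0^t ∫_ℝ K(s, y; ν, λ) dy ds = H(t; ν, λ) where H(t; ν, λ) := 2 e^{λ⁴ t/(4ν)} Φ(λ²√(t/(2ν))) − 1. -/
open MeasureTheory Real Set Filter

/-- Standard normal CDF. -/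
noncomputable def Phi (x : ℝ) : ℝ := ∫ y in Set.Iic x, Real.exp (-y^2/2) / Real.sqrt (2*Real.pi)

/-- Error function. -/
noncomputable def erf (x : ℝ) : ℝ := (2 / Real.sqrt Real.pi) * ∫ y in (0:ℝ)..x, Real.exp (-y^2)

/-- Complementary error function. -/
noncomputable def erfc (x : ℝ) : ℝ := 1 - erf x

/-- One-dimensional heat kernel with diffusion parameter ν. -/
noncomputable def G (ν t x : ℝ) : ℝ := (Real.sqrt (2*Real.pi*ν*t))⁻¹ * Real.exp (-x^2/(2*ν*t))

/-- The kernel K(t,x;ν,λ). -/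
noncomputable def K (ν lam t x : ℝ) : ℝ :=
  G (ν/2) t x * (lam^2 / Real.sqrt (4*Real.pi*ν*t)
    + lam^4/(2*ν) * Real.exp (lam^4*t/(4*ν)) * Phi (lam^2 * Real.sqrt (t/(2*ν))))

/-- The function H(t;ν,λ). -/
noncomputable def Hfun (ν lam t : ℝ) : ℝ :=
  2 * Real.exp (lam^4*t/(4*ν)) * Phi (lam^2 * Real.sqrt (t/(2*ν))) - 1

noncomputable def phi (x : ℝ) : ℝ := Real.exp (-x^2/2) / Real.sqrt (2*Real.pi)

lemma integrable_phi : Integrable phi := by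
  have h := integrable_exp_neg_mul_sq (show (0:ℝ) < 1/2 by norm_num)
  have h2 : Integrable (fun y : ℝ => Real.exp (-y^2/2)) :=
    h.congr (Filter.Eventually.of_forall fun y => by norm_num; ring)
  exact h2.div_const _

lemma integral_phi : ∫ y : ℝ, phi y = 1 := by
  unfold phi
  rw [integral_div]
  have h := integral_gaussian (1/2 : ℝ)
  have h2 : ∫ y : ℝ, Real.exp (-y^2/2) = Real.sqrt (2*Real.pi) := by
    rw [show (2*Real.pi) = Real.pi / (1/2) by ring, ← h]
    congr 1; ext y; congr 1; ring
  rw [h2, div_self (by positivity)]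

lemma continuous_phi : Continuous phi := by
  unfold phi
  fun_prop

lemma hasDerivAt_Phi (x : ℝ) : HasDerivAt Phi (phi x) x := by
  have hrepr : Phi = fun u => Phi 0 + ∫ y in (0:ℝ)..u, phi y := by
    funext u
    have := intervalIntegral.integral_Iic_sub_Iic (μ := volume) (f := phi) (a := 0) (b := u)
      integrable_phi.integrableOn integrable_phi.integrableOn
    unfold Phi phi at *; linarith
  rw [hrepr]
  exact ((continuous_phi.integral_hasStrictDerivAt 0 x).hasDerivAt).const_add _

lemma continuous_Phi : Continuous Phi :=
  continuous_iff_continuousAt.2 fun x => (hasDerivAt_Phi x).continuousAt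

lemma Phi_zero : Phi 0 = 1/2 := by
  have hsym : ∫ y in Iic (0:ℝ), phi y = ∫ y in Ioi (0:ℝ), phi y := by
    have h := integral_comp_neg_Iic (c := (0:ℝ)) (f := phi)
    simp_rw [show ∀ x:ℝ, phi (-x) = phi x from fun x => by unfold phi; rw [neg_sq]] at h
    simpa using h
  have htot := integral_phi
  have hsplit : (∫ y in Iic (0:ℝ), phi y) + ∫ y in Ioi (0:ℝ), phi y = ∫ y : ℝ, phi y :=
    intervalIntegral.integral_Iic_add_Ioi integrable_phi.integrableOn integrable_phi.integrableOn
  have : Phi 0 = ∫ y in Iic (0:ℝ), phi y := rfl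
  rw [this]; linarith

lemma integral_G {ν s : ℝ} (hν : 0 < ν) (hs : 0 < s) : ∫ y : ℝ, G (ν/2) s y = 1 := by
  have h2 : ∀ y : ℝ, G (ν/2) s y = (Real.sqrt (Real.pi*ν*s))⁻¹ * Real.exp (-((ν*s)⁻¹) * y^2) := by
    intro y; unfold G
    rw [show 2*Real.pi*(ν/2)*s = Real.pi*ν*s by ring]
    congr 2
    rw [show 2*(ν/2)*s = ν*s by ring]
    field_simp
  simp_rw [h2]
  rw [MeasureTheory.integral_const_mul, integral_gaussian,
    show Real.pi / (ν*s)⁻¹ = Real.pi*ν*s by field_simp,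
    inv_mul_cancel₀ (by positivity)]

theorem one_star_K_eq_H (ν lam t : ℝ) (hν : 0 < ν) (hlam : lam ≠ 0) (ht : 0 < t) (x : ℝ) :
    ∫ s in (0:ℝ)..t, ∫ y : ℝ, K ν lam s y = Hfun ν lam t := by
  set f : ℝ → ℝ := fun s => lam^2 / Real.sqrt (4*Real.pi*ν*s)
    + lam^4/(2*ν) * Real.exp (lam^4*s/(4*ν)) * Phi (lam^2 * Real.sqrt (s/(2*ν))) with hf
  have h2ν : (0:ℝ) < 2*ν := by linarith
  -- inner integral equals f on (0, t]
  have hcong : ∫ s in (0:ℝ)..t, ∫ y : ℝ, K ν lam s y = ∫ s in (0:ℝ)..t, f s := by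
    apply intervalIntegral.integral_congr_ae
    filter_upwards with s hs
    rw [Set.uIoc_of_le ht.le] at hs
    unfold K
    rw [MeasureTheory.integral_mul_const, integral_G hν hs.1, one_mul]
  rw [hcong]
  -- continuity of the exp/Phi part
  have hcont2 : Continuous (fun s : ℝ =>
      lam^4/(2*ν) * Real.exp (lam^4*s/(4*ν)) * Phi (lam^2 * Real.sqrt (s/(2*ν)))) := by
    apply Continuous.mul
    · exact continuous_const.mul (by fun_prop)
    · exact continuous_Phi.comp (by fun_prop)
  have hcontH : ContinuousOn (Hfun ν lam) (Set.Icc 0 t) := by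
    apply Continuous.continuousOn
    unfold Hfun
    apply Continuous.sub _ continuous_const
    exact (continuous_const.mul (by fun_prop)).mul (continuous_Phi.comp (by fun_prop))
  -- integrability of f
  have hint : IntervalIntegrable f volume 0 t := by
    have hbase : IntervalIntegrable (fun s : ℝ => s ^ (-(1/2) : ℝ)) volume 0 t :=
      intervalIntegral.intervalIntegrable_rpow' (by norm_num)
    have hb2 : IntervalIntegrable
        (fun s : ℝ => lam^2 / Real.sqrt (4*Real.pi*ν) * s ^ (-(1/2) : ℝ)) volume 0 t :=
      hbase.const_mul _
    have h1 : IntervalIntegrable (fun s : ℝ => lam^2 / Real.sqrt (4*Real.pi*ν*s)) volume 0 t := by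
      rw [intervalIntegrable_iff_integrableOn_Ioc_of_le ht.le] at hb2 ⊢
      apply hb2.congr_fun _ measurableSet_Ioc
      intro s hs
      have hs0 : 0 < s := hs.1
      show lam^2 / Real.sqrt (4*Real.pi*ν) * s ^ (-(1/2):ℝ) = lam^2 / Real.sqrt (4*Real.pi*ν*s)
      rw [Real.sqrt_mul (by positivity : (0:ℝ) ≤ 4*Real.pi*ν) s,
        Real.rpow_neg hs0.le, ← Real.sqrt_eq_rpow]
      ring
    exact h1.add (hcont2.intervalIntegrable 0 t)
  -- derivative of Hfun
  have hderiv : ∀ s ∈ Set.Ioo (0:ℝ) t, HasDerivAt (Hfun ν lam) (f s) s := by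
    intro s hs
    have hs0 : 0 < s := hs.1
    have hq : 0 < s/(2*ν) := div_pos hs0 h2ν
    have hq' : 0 < Real.sqrt (s/(2*ν)) := Real.sqrt_pos.2 hq
    have hlin : HasDerivAt (fun u : ℝ => lam^4*u/(4*ν)) (lam^4/(4*ν)) s := by
      simpa using (HasDerivAt.const_mul (lam^4) (hasDerivAt_id s)).div_const (4*ν)
    have hexp := hlin.exp
    have hdiv : HasDerivAt (fun u : ℝ => u/(2*ν)) ((2*ν)⁻¹) s := by
      simpa using (hasDerivAt_id s).div_const (2*ν)
    have hsqrt : HasDerivAt (fun u : ℝ => Real.sqrt (u/(2*ν)))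
        (1/(2*Real.sqrt (s/(2*ν))) * (2*ν)⁻¹) s :=
      (Real.hasDerivAt_sqrt (ne_of_gt hq)).comp s hdiv
    have harg := HasDerivAt.const_mul (lam^2) hsqrt
    have hPhi := (hasDerivAt_Phi (lam^2 * Real.sqrt (s/(2*ν)))).comp s harg
    have hfull := (HasDerivAt.const_mul (2:ℝ) (hexp.mul hPhi)).sub_const 1
    simp only [Function.comp_apply] at hfull
    have hfunx : Hfun ν lam = fun u =>
        2*(Real.exp (lam^4*u/(4*ν)) * Phi (lam^2 * Real.sqrt (u/(2*ν)))) - 1 := by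
      funext u; unfold Hfun; ring
    rw [hfunx]
    convert hfull using 1
    · rfl
    · rfl
    · rfl
    -- algebraic identity between f s and the computed derivative
    have hE : Real.exp (lam^4*s/(4*ν)) * phi (lam^2 * Real.sqrt (s/(2*ν)))
        = (Real.sqrt (2*Real.pi))⁻¹ := by
      unfold phi
      rw [mul_pow, Real.sq_sqrt hq.le, ← mul_div_assoc, ← Real.exp_add,
        show lam^4*s/(4*ν) + -((lam^2)^2 * (s/(2*ν)))/2 = 0 by field_simp; ring,
        Real.exp_zero, one_div]
    have hkey : Real.sqrt (4*Real.pi*ν*s)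
        = Real.sqrt (2*Real.pi) * (2*ν*Real.sqrt (s/(2*ν))) := by
      have h1 : 2*ν*Real.sqrt (s/(2*ν)) = Real.sqrt ((2*ν)^2 * (s/(2*ν))) := by
        rw [Real.sqrt_mul (sq_nonneg _), Real.sqrt_sq h2ν.le]
      rw [h1, ← Real.sqrt_mul (by positivity)]
      congr 1; field_simp; ring
    show lam^2 / Real.sqrt (4*Real.pi*ν*s)
        + lam^4/(2*ν) * Real.exp (lam^4*s/(4*ν)) * Phi (lam^2 * Real.sqrt (s/(2*ν))) = _
    rw [hkey]
    linear_combination (-(lam^2) * (2*ν*Real.sqrt (s/(2*ν)))⁻¹) * hE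
  rw [intervalIntegral.integral_eq_sub_of_hasDerivAt_of_le ht.le hcontH hderiv hint]
  have h0 : Hfun ν lam 0 = 0 := by
    unfold Hfun
    rw [show lam^4*0/(4*ν) = 0 by ring, show (0:ℝ)/(2*ν) = 0 by ring]
    simp [Phi_zero]
  rw [h0, sub_zero]
end

section
/- For every ν > 0, t > 0 and x, y ∈ ℝ, ∫_0^t ∫_ℝ G_ν(t − s, x − z) G_ν(t − s, y − z) dz ds = (|x−y|/ν)(Φ(|x−y|/√(2νt)) − 1) + 2t · G_{2ν}(t, x − y). -/
open MeasureTheory Real Set Filter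
open Topology

lemma gauss_density_eq (y : ℝ) : Real.exp (-y^2/2) / Real.sqrt (2*Real.pi)
    = Real.exp (-(1/2) * y^2) * (Real.sqrt (2*Real.pi))⁻¹ := by
  rw [div_eq_mul_inv]; ring_nf

lemma gauss_integrable : Integrable (fun y : ℝ => Real.exp (-y^2/2) / Real.sqrt (2*Real.pi)) := by
  simp only [gauss_density_eq]
  exact (integrable_exp_neg_mul_sq (by norm_num : (0:ℝ) < 1/2)).mul_const _

lemma gauss_total : ∫ y : ℝ, Real.exp (-y^2/2) / Real.sqrt (2*Real.pi) = 1 := by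
  simp only [gauss_density_eq]
  rw [integral_mul_const, integral_gaussian]
  norm_num
  rw [mul_mul_mul_comm, mul_inv_cancel₀ (by positivity), mul_inv_cancel₀ (by positivity), mul_one]

lemma Phi_tendsto : Tendsto Phi atTop (𝓝 1) := by
  have h := tendsto_setIntegral_of_monotone (μ := volume) (ι := ℝ)
    (s := fun i => Set.Iic i) (fun i => measurableSet_Iic)
    (fun a b hab => Iic_subset_Iic.2 hab)
    (f := fun y : ℝ => Real.exp (-y^2/2) / Real.sqrt (2*Real.pi))
    (by rw [Set.iUnion_Iic]; exact gauss_integrable.integrableOn)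
  rw [Set.iUnion_Iic, MeasureTheory.setIntegral_univ, gauss_total] at h
  exact h

lemma gauss_continuous : Continuous (fun y : ℝ => Real.exp (-y^2/2) / Real.sqrt (2*Real.pi)) := by
  fun_prop

lemma Phi_eq (x : ℝ) : Phi x = Phi 0 + ∫ u in (0:ℝ)..x, Real.exp (-u^2/2) / Real.sqrt (2*Real.pi) := by
  rw [← intervalIntegral.integral_Iic_sub_Iic gauss_integrable.integrableOn gauss_integrable.integrableOn]
  unfold Phi; ring

lemma hasDerivAt_Phi_s9 (x : ℝ) : HasDerivAt Phi (Real.exp (-x^2/2) / Real.sqrt (2*Real.pi)) x := by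
  have h := intervalIntegral.integral_hasDerivAt_right
    (f := fun y : ℝ => Real.exp (-y^2/2) / Real.sqrt (2*Real.pi)) (a := 0) (b := x)
    gauss_integrable.intervalIntegrable
    (gauss_continuous.stronglyMeasurableAtFilter _ _)
    gauss_continuous.continuousAt
  have : Phi = fun y => Phi 0 + ∫ u in (0:ℝ)..y, Real.exp (-u^2/2) / Real.sqrt (2*Real.pi) :=
    funext Phi_eq
  rw [this]
  exact h.const_add _


lemma conv_lemma (ν τ x y : ℝ) (hν : 0 < ν) (hτ : 0 < τ) :
    ∫ z : ℝ, G ν τ (x - z) * G ν τ (y - z) = G (2*ν) τ (x - y) := by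
  have hπ := Real.pi_pos
  have key : ∀ z : ℝ, G ν τ (x-z) * G ν τ (y-z)
      = ((2*Real.pi*ν*τ)⁻¹ * Real.exp (-(x-y)^2/(2*(2*ν)*τ)))
        * Real.exp (-(1/(ν*τ)) * (z - (x+y)/2)^2) := by
    intro z
    unfold G
    rw [show (Real.sqrt (2*Real.pi*ν*τ))⁻¹ * Real.exp (-(x-z)^2/(2*ν*τ))
        * ((Real.sqrt (2*Real.pi*ν*τ))⁻¹ * Real.exp (-(y-z)^2/(2*ν*τ)))
        = (Real.sqrt (2*Real.pi*ν*τ) * Real.sqrt (2*Real.pi*ν*τ))⁻¹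
          * (Real.exp (-(x-z)^2/(2*ν*τ)) * Real.exp (-(y-z)^2/(2*ν*τ))) by ring]
    rw [Real.mul_self_sqrt (by positivity), ← Real.exp_add]
    conv_rhs => rw [mul_assoc, ← Real.exp_add]
    rw [show (2*Real.pi*ν*τ) = (2*Real.pi*(ν*τ)) by ring]
    congr 1
    field_simp
    ring
  simp only [key]
  rw [MeasureTheory.integral_const_mul]
  have hshift : (∫ z : ℝ, Real.exp (-(1/(ν*τ)) * (z - (x+y)/2)^2))
      = ∫ u : ℝ, Real.exp (-(1/(ν*τ)) * u^2) :=
    MeasureTheory.integral_sub_right_eq_self (fun u : ℝ => Real.exp (-(1/(ν*τ)) * u^2)) ((x+y)/2)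
  rw [hshift, integral_gaussian]
  have h1 : Real.pi / (1/(ν*τ)) = Real.pi*ν*τ := by field_simp
  rw [h1]
  unfold G
  have hs : Real.sqrt (2*Real.pi*(2*ν)*τ) = 2 * Real.sqrt (Real.pi*ν*τ) := by
    rw [show 2*Real.pi*(2*ν)*τ = 2^2 * (Real.pi*ν*τ) by ring,
      Real.sqrt_mul (by positivity), Real.sqrt_sq (by norm_num)]
  rw [hs]
  have h2 : (2*Real.pi*ν*τ) = 2 * (Real.sqrt (Real.pi*ν*τ) * Real.sqrt (Real.pi*ν*τ)) := by
    rw [Real.mul_self_sqrt (by positivity)]; ring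
  rw [h2]
  have hsq : (0:ℝ) < Real.sqrt (Real.pi*ν*τ) := Real.sqrt_pos.2 (by positivity)
  field_simp

lemma G_measurable (ν a : ℝ) : Measurable (fun s : ℝ => G ν s a) := by
  unfold G
  fun_prop

lemma sqrt_factor (c : ℝ) (hc : 0 ≤ c) (s : ℝ) :
    Real.sqrt (c*s) = Real.sqrt c * Real.sqrt s := Real.sqrt_mul hc s

lemma G_intervalIntegrable (ν a t : ℝ) (hν : 0 < ν) (ht : 0 < t) :
    IntervalIntegrable (fun s => G (2*ν) s a) volume 0 t := by
  have hπ := Real.pi_pos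
  have hb : IntervalIntegrable (fun s : ℝ => (Real.sqrt (2*Real.pi*(2*ν)))⁻¹ * s ^ (-(1/2):ℝ))
      volume 0 t :=
    (intervalIntegral.intervalIntegrable_rpow' (by norm_num)).const_mul _
  refine hb.mono_fun ((G_measurable (2*ν) a).aestronglyMeasurable) ?_
  filter_upwards [ae_restrict_mem measurableSet_uIoc] with s hs
  rw [Set.uIoc_of_le ht.le] at hs
  have hs0 : 0 < s := hs.1
  have h1 : Real.sqrt (2*Real.pi*(2*ν)*s) = Real.sqrt (2*Real.pi*(2*ν)) * Real.sqrt s :=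
    Real.sqrt_mul (by positivity) s
  have h2 : s ^ (-(1/2):ℝ) = (Real.sqrt s)⁻¹ := by
    rw [Real.rpow_neg hs0.le, ← Real.sqrt_eq_rpow]
  simp only [G, Real.norm_eq_abs]
  rw [abs_of_nonneg (by positivity), abs_of_nonneg (by positivity), h1, h2, mul_inv]
  have : Real.exp (-a^2/(2*(2*ν)*s)) ≤ 1 := by
    rw [← Real.exp_zero]
    apply Real.exp_le_exp.2
    apply div_nonpos_of_nonpos_of_nonneg (neg_nonpos.2 (by positivity)) (by positivity)
  nlinarith [Real.sqrt_nonneg (2*Real.pi*(2*ν)), Real.sqrt_nonneg s, inv_nonneg.2 (Real.sqrt_nonneg (2*Real.pi*(2*ν))), inv_nonneg.2 (Real.sqrt_nonneg s), Real.exp_pos (-a^2/(2*(2*ν)*s)), mul_pos (inv_pos.2 (Real.sqrt_pos.2 (by positivity : (0:ℝ) < 2*Real.pi*(2*ν)))) (inv_pos.2 (Real.sqrt_pos.2 hs0))]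

lemma hasDerivAt_F (ν a : ℝ) (hν : 0 < ν) {τ : ℝ} (hτ : 0 < τ) :
    HasDerivAt (fun s : ℝ => Real.sqrt s * (Real.sqrt (Real.pi*ν))⁻¹ * Real.exp (-a^2/(4*ν*s))
      + |a|/ν * Phi (|a| / Real.sqrt (2*ν*s))) (G (2*ν) τ a) τ := by
  have hπ := Real.pi_pos
  have hs : (0:ℝ) < Real.sqrt τ := Real.sqrt_pos.2 hτ
  have heq2 : ∀ s : ℝ, |a| / Real.sqrt (2*ν*s) = |a| / Real.sqrt (2*ν) * (Real.sqrt s)⁻¹ := by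
    intro s
    rw [Real.sqrt_mul (by positivity), div_mul_eq_div_div, div_eq_mul_inv]
  simp only [heq2]
  have h1 : HasDerivAt Real.sqrt (1/(2*Real.sqrt τ)) τ := Real.hasDerivAt_sqrt hτ.ne'
  have e1 : HasDerivAt (fun s : ℝ => -a^2/(4*ν*s)) (-a^2/(4*ν) * -(τ^2)⁻¹) τ := by
    have heq : (fun s : ℝ => -a^2/(4*ν*s)) = (fun s : ℝ => -a^2/(4*ν) * s⁻¹) := by
      funext u; rw [div_mul_eq_div_div, div_eq_mul_inv]
    rw [heq]
    exact (hasDerivAt_inv hτ.ne').const_mul _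
  have e2 := e1.exp
  have e3 : HasDerivAt (fun s : ℝ => Real.sqrt s * (Real.sqrt (Real.pi*ν))⁻¹)
      ((1/(2*Real.sqrt τ)) * (Real.sqrt (Real.pi*ν))⁻¹) τ := h1.mul_const _
  have e4 := e3.mul e2
  have e5 : HasDerivAt (fun s : ℝ => (Real.sqrt s)⁻¹) (-(1/(2*Real.sqrt τ))/(Real.sqrt τ)^2) τ :=
    h1.inv hs.ne'
  have e6 := e5.const_mul (|a| / Real.sqrt (2*ν))
  have e7 := ((hasDerivAt_Phi_s9 (|a| / Real.sqrt (2*ν) * (Real.sqrt τ)⁻¹)).comp τ e6).const_mul (|a|/ν)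
  have e8 := e4.add e7
  simp only [Function.comp_def] at e8
  refine e8.congr_deriv (Eq.symm ?_)
  have hE : Real.exp (-(|a| / Real.sqrt (2*ν) * (Real.sqrt τ)⁻¹)^2/2) = Real.exp (-a^2/(4*ν*τ)) := by
    congr 1
    rw [mul_pow, div_pow, sq_abs, Real.sq_sqrt (by positivity : (0:ℝ) ≤ 2*ν),
      inv_pow, Real.sq_sqrt hτ.le]
    field_simp
    ring_nf
  rw [hE]
  unfold G
  have hroot : Real.sqrt (2*Real.pi*(2*ν)*τ) = 2 * Real.sqrt (Real.pi*ν) * Real.sqrt τ := by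
    rw [show 2*Real.pi*(2*ν)*τ = 2^2 * ((Real.pi*ν) * τ) by ring,
      Real.sqrt_mul (by positivity), Real.sqrt_sq (by norm_num),
      Real.sqrt_mul (by positivity), mul_assoc]
  rw [hroot]
  have hqr : Real.sqrt (2*Real.pi) * Real.sqrt (2*ν) = 2 * Real.sqrt (Real.pi*ν) := by
    rw [← Real.sqrt_mul (by positivity), show 2*Real.pi*(2*ν) = 2^2*(Real.pi*ν) by ring,
      Real.sqrt_mul (by positivity), Real.sqrt_sq (by norm_num)]
  have hτs : Real.sqrt τ ^ 2 = τ := Real.sq_sqrt hτ.le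
  have ha2 : |a|^2 = a^2 := sq_abs a
  have hp : (0:ℝ) < Real.sqrt (Real.pi*ν) := Real.sqrt_pos.2 (by positivity)
  have hq : (0:ℝ) < Real.sqrt (2*Real.pi) := Real.sqrt_pos.2 (by positivity)
  have hr : (0:ℝ) < Real.sqrt (2*ν) := Real.sqrt_pos.2 (by positivity)
  set E := Real.exp (-a^2/(4*ν*τ))
  set p := Real.sqrt (Real.pi*ν)
  set q := Real.sqrt (2*Real.pi)
  set r := Real.sqrt (2*ν)
  set u := Real.sqrt τ
  rw [show 2*(2*ν)*τ = 4*ν*τ by ring]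
  rw [show Real.exp (-a^2/(4*ν*τ)) = E from rfl]
  field_simp
  linear_combination (-2*u^4*a^2*E) * hqr + (4*E*p*τ^2) * ha2
    + (-4*E*p*a^2*(τ+u^2)) * hτs

lemma F_tendsto (ν a : ℝ) (hν : 0 < ν) :
    Tendsto (fun s : ℝ => Real.sqrt s * (Real.sqrt (Real.pi*ν))⁻¹ * Real.exp (-a^2/(4*ν*s))
      + |a|/ν * Phi (|a| / Real.sqrt (2*ν*s))) (𝓝[>] (0:ℝ)) (𝓝 (|a|/ν)) := by
  have hπ := Real.pi_pos
  have t1 : Tendsto (fun s : ℝ => Real.sqrt s * (Real.sqrt (Real.pi*ν))⁻¹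
      * Real.exp (-a^2/(4*ν*s))) (𝓝[>] (0:ℝ)) (𝓝 0) := by
    apply squeeze_zero' (g := fun s : ℝ => Real.sqrt s * (Real.sqrt (Real.pi*ν))⁻¹)
    · filter_upwards [self_mem_nhdsWithin] with s hs
      positivity
    · filter_upwards [self_mem_nhdsWithin] with s hs
      have hs' : (0:ℝ) < s := hs
      have : Real.exp (-a^2/(4*ν*s)) ≤ 1 := by
        rw [← Real.exp_zero]
        apply Real.exp_le_exp.2
        apply div_nonpos_of_nonpos_of_nonneg (neg_nonpos.2 (by positivity)) (by positivity)
      nlinarith [Real.sqrt_nonneg s, inv_nonneg.2 (Real.sqrt_nonneg (Real.pi*ν)),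
        mul_nonneg (Real.sqrt_nonneg s) (inv_nonneg.2 (Real.sqrt_nonneg (Real.pi*ν)))]
    · have : Tendsto (fun s : ℝ => Real.sqrt s * (Real.sqrt (Real.pi*ν))⁻¹) (𝓝 (0:ℝ))
          (𝓝 (Real.sqrt 0 * (Real.sqrt (Real.pi*ν))⁻¹)) :=
        (Real.continuous_sqrt.mul continuous_const).tendsto 0
      rw [Real.sqrt_zero, zero_mul] at this
      exact this.mono_left nhdsWithin_le_nhds
  have t2 : Tendsto (fun s : ℝ => |a|/ν * Phi (|a| / Real.sqrt (2*ν*s))) (𝓝[>] (0:ℝ))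
      (𝓝 (|a|/ν)) := by
    rcases eq_or_ne a 0 with rfl | ha
    · simp only [abs_zero, zero_div, zero_mul]
      exact tendsto_const_nhds
    · have ha' : 0 < |a| := abs_pos.2 ha
      have hsqrt : Tendsto Real.sqrt (𝓝[>] (0:ℝ)) (𝓝[>] (0:ℝ)) := by
        apply tendsto_nhdsWithin_of_tendsto_nhds_of_eventually_within
        · simpa using (Real.continuous_sqrt.tendsto 0).mono_left nhdsWithin_le_nhds
        · filter_upwards [self_mem_nhdsWithin] with s hs
          exact Real.sqrt_pos.2 hs
      have hinv : Tendsto (fun s : ℝ => (Real.sqrt s)⁻¹) (𝓝[>] (0:ℝ)) atTop :=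
        tendsto_inv_nhdsGT_zero.comp hsqrt
      have harg : Tendsto (fun s : ℝ => |a| / Real.sqrt (2*ν) * (Real.sqrt s)⁻¹)
          (𝓝[>] (0:ℝ)) atTop :=
        hinv.const_mul_atTop (by positivity)
      have hPhi : Tendsto (fun s : ℝ => Phi (|a| / Real.sqrt (2*ν) * (Real.sqrt s)⁻¹))
          (𝓝[>] (0:ℝ)) (𝓝 1) := Phi_tendsto.comp harg
      have heq2 : ∀ s : ℝ, |a| / Real.sqrt (2*ν*s) = |a| / Real.sqrt (2*ν) * (Real.sqrt s)⁻¹ := by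
        intro s
        rw [Real.sqrt_mul (by positivity), div_mul_eq_div_div, div_eq_mul_inv]
      simp only [heq2]
      have := hPhi.const_mul (|a|/ν)
      rw [mul_one] at this
      exact this
  have := t1.add t2
  rw [zero_add] at this
  exact this

lemma time_integral (ν a t : ℝ) (hν : 0 < ν) (ht : 0 < t) :
    ∫ s in (0:ℝ)..t, G (2*ν) s a
      = |a|/ν * (Phi (|a| / Real.sqrt (2*ν*t)) - 1) + 2*t * G (2*ν) t a := by
  have hπ := Real.pi_pos
  set F := fun s : ℝ => Real.sqrt s * (Real.sqrt (Real.pi*ν))⁻¹ * Real.exp (-a^2/(4*ν*s))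
      + |a|/ν * Phi (|a| / Real.sqrt (2*ν*s)) with hF
  have hInt := G_intervalIntegrable ν a t hν ht
  have hIcc : IntegrableOn (fun s => G (2*ν) s a) (Set.uIcc 0 t) volume := by
    rw [Set.uIcc_of_le ht.le]
    have h1 : IntegrableOn (fun s => G (2*ν) s a) (Set.Ioc 0 t) volume := hInt.1
    have h2 : IntegrableOn (fun s => G (2*ν) s a) ({0} : Set ℝ) volume := by
      exact (integrableOn_singleton_iff (by simp)).2 (Or.inr (by simp))
    exact (h1.union h2).mono_set (by
      intro z hz
      rcases eq_or_ne z 0 with rfl | hz0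
      · exact Or.inr rfl
      · exact Or.inl ⟨lt_of_le_of_ne hz.1 (Ne.symm hz0), hz.2⟩)
  have hcont : Tendsto (fun ε => ∫ s in ε..t, G (2*ν) s a) (𝓝[>] (0:ℝ))
      (𝓝 (∫ s in (0:ℝ)..t, G (2*ν) s a)) := by
    have hco := intervalIntegral.continuousOn_primitive_interval_left hIcc
    have h0 : (0:ℝ) ∈ Set.uIcc 0 t := Set.left_mem_uIcc
    have := (hco 0 h0).tendsto
    refine this.mono_left ?_
    rw [← nhdsWithin_Ioo_eq_nhdsGT ht]
    apply nhdsWithin_mono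
    intro z hz
    rw [Set.uIcc_of_le ht.le]
    exact ⟨hz.1.le, hz.2.le⟩
  have hFTC : ∀ᶠ ε in 𝓝[>] (0:ℝ), (∫ s in ε..t, G (2*ν) s a) = F t - F ε := by
    filter_upwards [Ioo_mem_nhdsGT_of_mem (Set.mem_Ico.2 ⟨le_refl 0, ht⟩)] with ε hε
    apply intervalIntegral.integral_eq_sub_of_hasDerivAt
    · intro τ hτ
      apply hasDerivAt_F ν a hν
      rw [Set.uIcc_of_le hε.2.le] at hτ
      exact lt_of_lt_of_le hε.1 hτ.1
    · exact hInt.mono_set (by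
        rw [Set.uIcc_of_le hε.2.le, Set.uIcc_of_le ht.le]
        exact Set.Icc_subset_Icc hε.1.le le_rfl)
  have hlim : Tendsto (fun ε => ∫ s in ε..t, G (2*ν) s a) (𝓝[>] (0:ℝ))
      (𝓝 (F t - (|a|/ν))) := by
    have := (tendsto_const_nhds (x := F t)).sub (F_tendsto ν a hν)
    exact this.congr' (hFTC.mono fun ε h => h.symm)
  have heq := tendsto_nhds_unique hcont hlim
  rw [heq, hF]
  have hroot : Real.sqrt (2*Real.pi*(2*ν)*t) = 2 * Real.sqrt (Real.pi*ν) * Real.sqrt t := by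
    rw [show 2*Real.pi*(2*ν)*t = 2^2 * ((Real.pi*ν) * t) by ring,
      Real.sqrt_mul (by positivity), Real.sqrt_sq (by norm_num),
      Real.sqrt_mul (by positivity), mul_assoc]
  unfold G
  rw [hroot, show 2*(2*ν)*t = 4*ν*t by ring]
  have hts : Real.sqrt t * Real.sqrt t = t := Real.mul_self_sqrt ht.le
  have hp : (0:ℝ) < Real.sqrt (Real.pi*ν) := Real.sqrt_pos.2 (by positivity)
  have hst : (0:ℝ) < Real.sqrt t := Real.sqrt_pos.2 ht
  have h2t : 2*t*((2 * Real.sqrt (Real.pi*ν) * Real.sqrt t)⁻¹ * Real.exp (-a^2/(4*ν*t)))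
      = Real.sqrt t * (Real.sqrt (Real.pi*ν))⁻¹ * Real.exp (-a^2/(4*ν*t)) := by
    have hts2 : Real.sqrt t ^ 2 = t := Real.sq_sqrt ht.le
    field_simp
    linear_combination (-1) * hts2
  rw [h2t]
  ring

theorem two_point_convolution (ν t x y : ℝ) (hν : 0 < ν) (ht : 0 < t) :
    ∫ s in (0:ℝ)..t, ∫ z : ℝ, G ν (t - s) (x - z) * G ν (t - s) (y - z)
      = |x - y|/ν * (Phi (|x - y| / Real.sqrt (2*ν*t)) - 1) + 2*t * G (2*ν) t (x - y) := by
  have h1 : (∫ s in (0:ℝ)..t, ∫ z : ℝ, G ν (t - s) (x - z) * G ν (t - s) (y - z))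
      = ∫ s in (0:ℝ)..t, G (2*ν) (t - s) (x - y) := by
    apply intervalIntegral.integral_congr_ae
    have hae : ∀ᵐ s : ℝ, s ≠ t := by
      rw [MeasureTheory.ae_iff]
      simpa [not_not] using measure_singleton (μ := (volume : Measure ℝ)) t
    filter_upwards [hae] with s hst hs
    rw [Set.uIoc_of_le ht.le] at hs
    have hts : 0 < t - s := sub_pos.2 (lt_of_le_of_ne hs.2 hst)
    exact conv_lemma ν (t-s) x y hν hts
  rw [h1]
  have h2 := intervalIntegral.integral_comp_sub_left (a := (0:ℝ)) (b := t)
    (fun s => G (2*ν) s (x - y)) t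
  simp only [sub_zero, sub_self] at h2
  rw [h2]
  exact time_integral ν (x - y) t hν ht
end

section
/- Let μ be a bounded α-Hölder continuous function on ℝ with α ∈ (0,1], and define J₀(t,x) := ∫_ℝ G_ν(t, x−y) μ(y) dy for t > 0 and J₀(0,x) := μ(x). Then there is a constant C such that |J₀(t,x) − J₀(s,x)| ≤ C|t − s|^{α/2} and |J₀(t,x) − J₀(t,y)| ≤ C|x − y|^{α} for all s, t ≥ 0 and x, y ∈ ℝ; in particular J₀ is jointly continuous on [0,∞) × ℝ, Hölder of exponent α/2 in time and α in space. -/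
open MeasureTheory Real Set Filter
open Topology

lemma phi_integrable : Integrable (fun z : ℝ => (Real.sqrt (2*Real.pi))⁻¹ * Real.exp (-z^2/2)) := by
  have h : Integrable (fun z : ℝ => Real.exp (-(1/2 : ℝ)*z^2)) := integrable_exp_neg_mul_sq (by norm_num)
  have := h.const_mul ((Real.sqrt (2*Real.pi))⁻¹)
  refine this.congr (Eventually.of_forall fun z => ?_)
  ring_nf

lemma phi_integral : (∫ z : ℝ, (Real.sqrt (2*Real.pi))⁻¹ * Real.exp (-z^2/2)) = 1 := by
  have h := integral_gaussian (1/2)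
  have h2 : (∫ z : ℝ, Real.exp (-z^2/2)) = Real.sqrt (2*Real.pi) := by
    have : ∀ z : ℝ, Real.exp (-z^2/2) = Real.exp (-(1/2:ℝ)*z^2) := fun z => by ring_nf
    rw [show (fun z : ℝ => Real.exp (-z^2/2)) = fun z : ℝ => Real.exp (-(1/2:ℝ)*z^2) from funext this, h]
    norm_num [mul_comm]
  rw [integral_const_mul, h2, inv_mul_cancel₀]
  positivity

lemma phi_weight_integrable :
    Integrable (fun z : ℝ => (Real.sqrt (2*Real.pi))⁻¹ * Real.exp (-z^2/2) * (1 + |z|)) := by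
  have h1 : Integrable (fun z : ℝ => z * Real.exp (-(1/2:ℝ)*z^2)) :=
    integrable_mul_exp_neg_mul_sq (by norm_num)
  have h2 : Integrable (fun z : ℝ => |z| * Real.exp (-z^2/2)) := by
    refine h1.abs.congr (Eventually.of_forall fun z => ?_)
    show |z * Real.exp (-(1/2:ℝ)*z^2)| = |z| * Real.exp (-z^2/2)
    rw [abs_mul, abs_of_pos (Real.exp_pos _)]
    ring_nf
  have h3 := (phi_integrable.add (h2.const_mul ((Real.sqrt (2*Real.pi))⁻¹)))
  refine h3.congr (Eventually.of_forall fun z => ?_)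
  simp only [Pi.add_apply]
  ring

lemma sqrt_abs_sub_le (s t : ℝ) (hs : 0 ≤ s) (ht : 0 ≤ t) :
    |Real.sqrt t - Real.sqrt s| ≤ Real.sqrt |t - s| := by
  wlog h : s ≤ t generalizing s t
  · have := this t s ht hs (le_of_not_ge h)
    rwa [abs_sub_comm, abs_sub_comm s t] at this
  have hts : 0 ≤ t - s := sub_nonneg.2 h
  have key : Real.sqrt t ≤ Real.sqrt s + Real.sqrt (t - s) := by
    have h1 : t ≤ (Real.sqrt s + Real.sqrt (t-s))^2 := by
      nlinarith [Real.sq_sqrt hs, Real.sq_sqrt hts, Real.sqrt_nonneg s, Real.sqrt_nonneg (t-s)]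
    calc Real.sqrt t ≤ Real.sqrt ((Real.sqrt s + Real.sqrt (t-s))^2) := Real.sqrt_le_sqrt h1
    _ = Real.sqrt s + Real.sqrt (t-s) := Real.sqrt_sq (by positivity)
  rw [abs_of_nonneg hts, abs_of_nonneg (sub_nonneg.2 (Real.sqrt_le_sqrt h))]
  linarith

lemma tendsto_abs_rpow {β : ℝ} (hβ : 0 < β) : Tendsto (fun u : ℝ => |u| ^ β) (𝓝 0) (𝓝 0) := by
  have h1 : ContinuousAt (fun x : ℝ => x ^ β) 0 := Real.continuousAt_rpow_const 0 β (Or.inr hβ.le)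
  have h2 : Tendsto (fun u : ℝ => |u|) (𝓝 (0:ℝ)) (𝓝 (0:ℝ)) := by
    simpa using continuous_abs.tendsto (0:ℝ)
  have := h1.tendsto.comp h2
  simpa only [Function.comp_def, Real.zero_rpow hβ.ne'] using this

lemma heat_rep (ν t : ℝ) (hν : 0 < ν) (ht : 0 < t) (μ : ℝ → ℝ) (x : ℝ) :
    (∫ y : ℝ, G ν t (x - y) * μ y)
      = ∫ z : ℝ, (Real.sqrt (2*Real.pi))⁻¹ * Real.exp (-z^2/2) * μ (x - Real.sqrt (ν*t) * z) := by
  have s1 : (∫ y : ℝ, G ν t (x - y) * μ y) = ∫ y : ℝ, G ν t y * μ (x - y) := by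
    have h := MeasureTheory.integral_sub_left_eq_self (fun y => G ν t y * μ (x - y)) volume x
    simpa using h
  rw [s1]
  set c := Real.sqrt (ν*t) with hc
  have hνt : 0 < ν * t := mul_pos hν ht
  have hc0 : 0 < c := Real.sqrt_pos.2 hνt
  have hc2 : c^2 = ν*t := Real.sq_sqrt hνt.le
  have s2 := MeasureTheory.Measure.integral_comp_mul_left (fun y => G ν t y * μ (x - y)) c
  have s3 : (∫ y : ℝ, G ν t y * μ (x - y)) = c * ∫ z : ℝ, G ν t (c*z) * μ (x - c*z) := by
    rw [s2, abs_of_pos (inv_pos.2 hc0), smul_eq_mul, ← mul_assoc, mul_inv_cancel₀ hc0.ne', one_mul]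
  rw [s3, ← MeasureTheory.integral_const_mul]
  congr 1; funext z
  have hG : c * G ν t (c * z) = (Real.sqrt (2*Real.pi))⁻¹ * Real.exp (-z^2/2) := by
    unfold G
    have hexp : -(c*z)^2/(2*ν*t) = -z^2/2 := by
      rw [mul_pow, hc2]; field_simp
    have hsq : Real.sqrt (2*Real.pi*ν*t) = Real.sqrt (2*Real.pi) * c := by
      rw [hc, ← Real.sqrt_mul (by positivity)]; ring_nf
    rw [hexp, hsq]
    field_simp
  rw [← mul_assoc, hG]

theorem J0_Holder_regularity (ν : ℝ) (hν : 0 < ν) (α : ℝ) (hα0 : 0 < α) (hα1 : α ≤ 1)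
    (μ : ℝ → ℝ) (hbdd : ∃ M : ℝ, ∀ x, |μ x| ≤ M)
    (hHolder : ∃ Cα : ℝ, ∀ x y : ℝ, |μ x - μ y| ≤ Cα * |x - y|^α)
    (J : ℝ → ℝ → ℝ)
    (hJpos : ∀ t > (0:ℝ), ∀ x : ℝ, J t x = ∫ y : ℝ, G ν t (x - y) * μ y)
    (hJ0 : ∀ x : ℝ, J 0 x = μ x) :
    (∃ C : ℝ, ∀ s ≥ (0:ℝ), ∀ t ≥ (0:ℝ), ∀ x y : ℝ,
      |J t x - J s x| ≤ C * |t - s|^(α/2) ∧ |J t x - J t y| ≤ C * |x - y|^α) ∧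
    ContinuousOn (fun p : ℝ × ℝ => J p.1 p.2) (Set.Ici 0 ×ˢ Set.univ) := by
  obtain ⟨Cα, hC⟩ := hHolder
  obtain ⟨M, hM⟩ := hbdd
  set Cb := max Cα 0 with hCbdef
  have hCb0 : (0:ℝ) ≤ Cb := le_max_right _ _
  have hC' : ∀ x y : ℝ, |μ x - μ y| ≤ Cb * |x - y| ^ α := fun x y =>
    (hC x y).trans (mul_le_mul_of_nonneg_right (le_max_left _ _)
      (Real.rpow_nonneg (abs_nonneg _) _))
  set φ : ℝ → ℝ := fun z => (Real.sqrt (2*Real.pi))⁻¹ * Real.exp (-z^2/2) with hφdef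
  have hφ0 : ∀ z, 0 ≤ φ z := fun z => by positivity
  have hφint : Integrable φ := phi_integrable
  have hφ1 : ∫ z, φ z = 1 := phi_integral
  have hwint : Integrable (fun z => φ z * (1 + |z|)) := phi_weight_integrable
  set E := ∫ z : ℝ, φ z * (1 + |z|) with hEdef
  have hE0 : 0 ≤ E := integral_nonneg fun z => by positivity
  -- μ is continuous
  have hμc : Continuous μ := by
    rw [continuous_iff_continuousAt]
    intro x
    rw [ContinuousAt, tendsto_iff_dist_tendsto_zero]
    have hten : Tendsto (fun y => Cb * |y - x| ^ α) (𝓝 x) (𝓝 0) := by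
      have h1 : Tendsto (fun y : ℝ => y - x) (𝓝 x) (𝓝 0) := by
        simpa only [Pi.sub_def, id_eq, sub_self] using (continuous_id.sub (continuous_const (y := x))).tendsto x
      have := ((tendsto_abs_rpow hα0).comp h1).const_mul Cb
      simpa using this
    refine squeeze_zero (fun y => dist_nonneg) (fun y => ?_) hten
    rw [Real.dist_eq]
    exact hC' y x
  -- integrability of the representation integrand
  have hint : ∀ c x : ℝ, Integrable (fun z => φ z * μ (x - c * z)) := by
    intro c x
    refine (hφint.const_mul M).mono' ?_ (Eventually.of_forall fun z => ?_)
    · exact (hφint.aestronglyMeasurable.mul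
        ((hμc.comp (continuous_const.sub (continuous_const.mul continuous_id))).aestronglyMeasurable))
    · rw [norm_mul, Real.norm_eq_abs, Real.norm_eq_abs, abs_of_nonneg (hφ0 z), mul_comm M]
      exact mul_le_mul_of_nonneg_left (hM _) (hφ0 z)
  -- representation valid for all t ≥ 0
  have hrep : ∀ t : ℝ, 0 ≤ t → ∀ x : ℝ, J t x = ∫ z, φ z * μ (x - Real.sqrt (ν*t) * z) := by
    intro t ht x
    rcases ht.lt_or_eq with h | h
    · rw [hJpos t h x, heat_rep ν t hν h μ x]
    · rw [← h, hJ0, mul_zero, Real.sqrt_zero]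
      simp only [zero_mul, sub_zero]
      rw [MeasureTheory.integral_mul_const, hφ1, one_mul]
  -- pointwise bound |z|^α ≤ 1 + |z|
  have habsz : ∀ z : ℝ, |z| ^ α ≤ 1 + |z| := by
    intro z
    rcases le_or_gt (|z|) 1 with h | h
    · have := Real.rpow_le_one (abs_nonneg z) h hα0.le
      linarith [abs_nonneg z]
    · have h2 : |z| ^ α ≤ |z| ^ (1:ℝ) :=
        Real.rpow_le_rpow_of_exponent_le h.le hα1
      rw [Real.rpow_one] at h2
      linarith
  -- key time-type estimate
  have keyt : ∀ c d x : ℝ,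
      |(∫ z, φ z * μ (x - c * z)) - ∫ z, φ z * μ (x - d * z)| ≤ Cb * E * |c - d| ^ α := by
    intro c d x
    rw [← MeasureTheory.integral_sub (hint c x) (hint d x)]
    have hb := MeasureTheory.norm_integral_le_of_norm_le
      (f := fun z => φ z * μ (x - c * z) - φ z * μ (x - d * z))
      (g := fun z => Cb * |c - d| ^ α * (φ z * (1 + |z|)))
      (hwint.const_mul _) (Eventually.of_forall fun z => ?_)
    · rw [Real.norm_eq_abs] at hb
      refine hb.trans ?_
      rw [MeasureTheory.integral_const_mul, ← hEdef]
      ring_nf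
      exact le_refl _
    · show ‖φ z * μ (x - c * z) - φ z * μ (x - d * z)‖ ≤ Cb * |c - d| ^ α * (φ z * (1 + |z|))
      rw [Real.norm_eq_abs, ← mul_sub, abs_mul, abs_of_nonneg (hφ0 z)]
      have h1 : |μ (x - c * z) - μ (x - d * z)| ≤ Cb * (|c - d| ^ α * |z| ^ α) := by
        have := hC' (x - c * z) (x - d * z)
        have heq : |x - c * z - (x - d * z)| = |c - d| * |z| := by
          rw [show x - c * z - (x - d * z) = (d - c) * z by ring, abs_mul, abs_sub_comm]
        rw [heq, Real.mul_rpow (abs_nonneg _) (abs_nonneg _)] at this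
        linarith
      calc φ z * |μ (x - c * z) - μ (x - d * z)|
          ≤ φ z * (Cb * (|c - d| ^ α * |z| ^ α)) :=
            mul_le_mul_of_nonneg_left h1 (hφ0 z)
        _ ≤ φ z * (Cb * (|c - d| ^ α * (1 + |z|))) := by
            have h0 : (0:ℝ) ≤ |c - d| ^ α := Real.rpow_nonneg (abs_nonneg _) _
            exact mul_le_mul_of_nonneg_left (mul_le_mul_of_nonneg_left
              (mul_le_mul_of_nonneg_left (habsz z) h0) hCb0) (hφ0 z)
        _ = Cb * |c - d| ^ α * (φ z * (1 + |z|)) := by ring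
  -- key space-type estimate
  have keyx : ∀ c x y : ℝ,
      |(∫ z, φ z * μ (x - c * z)) - ∫ z, φ z * μ (y - c * z)| ≤ Cb * |x - y| ^ α := by
    intro c x y
    rw [← MeasureTheory.integral_sub (hint c x) (hint c y)]
    have hb := MeasureTheory.norm_integral_le_of_norm_le
      (f := fun z => φ z * μ (x - c * z) - φ z * μ (y - c * z))
      (g := fun z => Cb * |x - y| ^ α * φ z)
      (hφint.const_mul _) (Eventually.of_forall fun z => ?_)
    · rw [Real.norm_eq_abs] at hb
      refine hb.trans ?_
      rw [MeasureTheory.integral_const_mul, hφ1, mul_one]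
    · show ‖φ z * μ (x - c * z) - φ z * μ (y - c * z)‖ ≤ Cb * |x - y| ^ α * φ z
      rw [Real.norm_eq_abs, ← mul_sub, abs_mul, abs_of_nonneg (hφ0 z)]
      have h1 : |μ (x - c * z) - μ (y - c * z)| ≤ Cb * |x - y| ^ α := by
        have := hC' (x - c * z) (y - c * z)
        have heq : |x - c * z - (y - c * z)| = |x - y| := by
          rw [show x - c * z - (y - c * z) = x - y by ring]
        rwa [heq] at this
      calc φ z * |μ (x - c * z) - μ (y - c * z)|
          ≤ φ z * (Cb * |x - y| ^ α) := mul_le_mul_of_nonneg_left h1 (hφ0 z)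
        _ = Cb * |x - y| ^ α * φ z := by ring
  -- the constant
  set C := Cb * E * (ν ^ (α/2) + 1) + Cb with hCdef
  have hν2 : (0:ℝ) ≤ ν ^ (α/2) := Real.rpow_nonneg hν.le _
  have hCbound1 : Cb * E * ν ^ (α/2) ≤ C := by
    rw [hCdef]; nlinarith [mul_nonneg hCb0 hE0]
  have hCbound2 : Cb ≤ C := by
    rw [hCdef]
    have h9 : 0 ≤ Cb * E * (ν ^ (α/2) + 1) := mul_nonneg (mul_nonneg hCb0 hE0) (by positivity)
    linarith
  have hC0 : 0 ≤ C := hCb0.trans hCbound2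
  have hmain : ∀ s, 0 ≤ s → ∀ t, 0 ≤ t → ∀ x y : ℝ,
      |J t x - J s x| ≤ C * |t - s| ^ (α/2) ∧ |J t x - J t y| ≤ C * |x - y| ^ α := by
    intro s hs t ht x y
    constructor
    · rw [hrep t ht x, hrep s hs x]
      refine (keyt _ _ _).trans ?_
      have h1 : |Real.sqrt (ν*t) - Real.sqrt (ν*s)| ≤ Real.sqrt ν * Real.sqrt (|t - s|) := by
        have h := sqrt_abs_sub_le (ν*s) (ν*t) (by positivity) (by positivity)
        have heq2 : Real.sqrt |ν*t - ν*s| = Real.sqrt ν * Real.sqrt |t - s| := by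
          rw [show |ν*t - ν*s| = ν * |t - s| by rw [← mul_sub, abs_mul, abs_of_pos hν],
            Real.sqrt_mul hν.le]
        rwa [heq2] at h
      have h2 : |Real.sqrt (ν*t) - Real.sqrt (ν*s)| ^ α
          ≤ ν ^ (α/2) * |t - s| ^ (α/2) := by
        have h3 : (Real.sqrt ν * Real.sqrt (|t - s|)) ^ α
            = ν ^ (α/2) * |t - s| ^ (α/2) := by
          rw [Real.mul_rpow (Real.sqrt_nonneg _) (Real.sqrt_nonneg _),
            Real.sqrt_eq_rpow, Real.sqrt_eq_rpow,
            ← Real.rpow_mul hν.le, ← Real.rpow_mul (abs_nonneg _)]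
          rw [show (1/(2:ℝ))*α = α/2 by ring]
        rw [← h3]
        exact Real.rpow_le_rpow (abs_nonneg _) h1 hα0.le
      calc Cb * E * |Real.sqrt (ν*t) - Real.sqrt (ν*s)| ^ α
          ≤ Cb * E * (ν ^ (α/2) * |t - s| ^ (α/2)) :=
            mul_le_mul_of_nonneg_left h2 (by positivity)
        _ = Cb * E * ν ^ (α/2) * |t - s| ^ (α/2) := by ring
        _ ≤ C * |t - s| ^ (α/2) :=
            mul_le_mul_of_nonneg_right hCbound1 (Real.rpow_nonneg (abs_nonneg _) _)
    · rw [hrep t ht x, hrep t ht y]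
      refine (keyx _ _ _).trans ?_
      exact mul_le_mul_of_nonneg_right hCbound2 (Real.rpow_nonneg (abs_nonneg _) _)
  refine ⟨⟨C, fun s hs t ht x y => hmain s hs t ht x y⟩, ?_⟩
  -- continuity
  intro q hq
  have hq1 : (0:ℝ) ≤ q.1 := (Set.mem_prod.1 hq).1
  rw [ContinuousWithinAt, tendsto_iff_dist_tendsto_zero]
  have hbound : ∀ p : ℝ × ℝ, p ∈ Set.Ici (0:ℝ) ×ˢ (Set.univ : Set ℝ) →
      dist ((fun p : ℝ × ℝ => J p.1 p.2) p) ((fun p : ℝ × ℝ => J p.1 p.2) q)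
        ≤ C * |p.1 - q.1| ^ (α/2) + C * |p.2 - q.2| ^ α := by
    intro p hp
    have hp1 : (0:ℝ) ≤ p.1 := (Set.mem_prod.1 hp).1
    have h1 := (hmain q.1 hq1 p.1 hp1 q.2 q.2).1
    have h2 := (hmain p.1 hp1 p.1 hp1 p.2 q.2).2
    calc dist (J p.1 p.2) (J q.1 q.2)
        ≤ dist (J p.1 p.2) (J p.1 q.2) + dist (J p.1 q.2) (J q.1 q.2) := dist_triangle _ _ _
      _ ≤ C * |p.2 - q.2| ^ α + C * |p.1 - q.1| ^ (α/2) := by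
          rw [Real.dist_eq, Real.dist_eq]
          exact add_le_add h2 h1
      _ = C * |p.1 - q.1| ^ (α/2) + C * |p.2 - q.2| ^ α := by ring
  have hten : Tendsto (fun p : ℝ × ℝ => C * |p.1 - q.1| ^ (α/2) + C * |p.2 - q.2| ^ α)
      (𝓝[Set.Ici (0:ℝ) ×ˢ (Set.univ : Set ℝ)] q) (𝓝 0) := by
    have t1 : Tendsto (fun p : ℝ × ℝ => p.1 - q.1) (𝓝 q) (𝓝 0) := by
      have := ((continuous_fst.sub continuous_const :
        Continuous fun p : ℝ × ℝ => p.1 - q.1)).tendsto q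
      simpa only [Pi.sub_def, sub_self] using this
    have t2 : Tendsto (fun p : ℝ × ℝ => p.2 - q.2) (𝓝 q) (𝓝 0) := by
      have := ((continuous_snd.sub continuous_const :
        Continuous fun p : ℝ × ℝ => p.2 - q.2)).tendsto q
      simpa only [Pi.sub_def, sub_self] using this
    have s1 := ((tendsto_abs_rpow (by positivity : (0:ℝ) < α/2)).comp t1).const_mul C
    have s2 := ((tendsto_abs_rpow hα0).comp t2).const_mul C
    have := s1.add s2
    simp only [mul_zero, add_zero] at this
    exact this.mono_left nhdsWithin_le_nhds
  exact squeeze_zero' (Eventually.of_forall fun p => dist_nonneg)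
    (eventually_mem_nhdsWithin.mono hbound) hten
end
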